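/- For every x with 0.301 < x < π/2, one has (tan x)/x < (8 + b(x))/(π² − 4x²), where b(x) = (8/π)(π/2 − x) + (16/π² − 8/3)(π/2 − x)² + (32/π³ − 8/(3π))(π/2 − x)³. -/

import Mathlib

open Real

lemma nonneg_of_deriv (f f' : ℝ → ℝ) (hd : ∀ y : ℝ, HasDerivAt f (f' y) y)
    (h0 : f 0 = 0) (hf' : ∀ y : ℝ, 0 ≤ y → 0 ≤ f' y) {t : ℝ} (ht : 0 ≤ t) : 0 ≤ f t := by
  have hdf : Differentiable ℝ f := fun y => (hd y).differentiableAt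
  have hm : MonotoneOn f (Set.Ici 0) := by
    apply monotoneOn_of_deriv_nonneg (convex_Ici 0) hdf.continuous.continuousOn
      hdf.differentiableOn
    intro y hy
    rw [interior_Ici] at hy
    rw [(hd y).deriv]
    exact hf' y (le_of_lt hy)
  have h := hm (Set.mem_Ici.2 le_rfl) (Set.mem_Ici.2 ht) ht
  linarith [h0 ▸ h]

lemma B1 {t : ℝ} (ht : 0 ≤ t) : Real.sin t ≤ t := by
  have := nonneg_of_deriv (fun y => y - Real.sin y) (fun y => 1 - Real.cos y)
    (fun y => by exact (hasDerivAt_id y).sub (Real.hasDerivAt_sin y))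
    (by simp) (fun y _ => by show (0:ℝ) ≤ 1 - Real.cos y; nlinarith [Real.cos_le_one y]) ht
  linarith

lemma B2 {t : ℝ} (ht : 0 ≤ t) : 1 - t^2/2 ≤ Real.cos t := by
  have := nonneg_of_deriv (fun y => Real.cos y - 1 + y^2/2) (fun y => -Real.sin y + y)
    (fun y => by
      have h := ((Real.hasDerivAt_cos y).sub_const 1).add ((hasDerivAt_pow 2 y).div_const 2)
      exact h.congr_deriv (by push_cast; ring))
    (by norm_num) (fun y hy => by show (0:ℝ) ≤ -Real.sin y + y; nlinarith [B1 hy]) ht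
  linarith

lemma B3 {t : ℝ} (ht : 0 ≤ t) : t - t^3/6 ≤ Real.sin t := by
  have := nonneg_of_deriv (fun y => Real.sin y - y + y^3/6)
    (fun y => Real.cos y - 1 + y^2/2)
    (fun y => by
      have h := ((Real.hasDerivAt_sin y).sub (hasDerivAt_id y)).add ((hasDerivAt_pow 3 y).div_const 6)
      exact h.congr_deriv (by push_cast; ring))
    (by norm_num) (fun y hy => by show (0:ℝ) ≤ Real.cos y - 1 + y^2/2; nlinarith [B2 hy]) ht
  linarith

lemma B4 {t : ℝ} (ht : 0 ≤ t) : Real.cos t ≤ 1 - t^2/2 + t^4/24 := by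
  have := nonneg_of_deriv (fun y => 1 - y^2/2 + y^4/24 - Real.cos y)
    (fun y => -y + y^3/6 + Real.sin y)
    (fun y => by
      have h := ((((hasDerivAt_const y (1:ℝ)).sub ((hasDerivAt_pow 2 y).div_const 2)).add
        ((hasDerivAt_pow 4 y).div_const 24)).sub (Real.hasDerivAt_cos y))
      exact h.congr_deriv (by push_cast; ring))
    (by norm_num) (fun y hy => by show (0:ℝ) ≤ -y + y^3/6 + Real.sin y; nlinarith [B3 hy]) ht
  linarith

lemma B5 {t : ℝ} (ht : 0 ≤ t) : Real.sin t ≤ t - t^3/6 + t^5/120 := by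
  have := nonneg_of_deriv (fun y => y - y^3/6 + y^5/120 - Real.sin y)
    (fun y => 1 - y^2/2 + y^4/24 - Real.cos y)
    (fun y => by
      have h := (((hasDerivAt_id y).sub ((hasDerivAt_pow 3 y).div_const 6)).add
        ((hasDerivAt_pow 5 y).div_const 120)).sub (Real.hasDerivAt_sin y)
      exact h.congr_deriv (by push_cast; ring))
    (by norm_num) (fun y hy => by show (0:ℝ) ≤ 1 - y^2/2 + y^4/24 - Real.cos y; nlinarith [B4 hy]) ht
  linarith

lemma B6 {t : ℝ} (ht : 0 ≤ t) : 1 - t^2/2 + t^4/24 - t^6/720 ≤ Real.cos t := by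
  have := nonneg_of_deriv (fun y => Real.cos y - 1 + y^2/2 - y^4/24 + y^6/720)
    (fun y => -Real.sin y + y - y^3/6 + y^5/120)
    (fun y => by
      have h := ((((Real.hasDerivAt_cos y).sub_const 1).add ((hasDerivAt_pow 2 y).div_const 2)).sub
        ((hasDerivAt_pow 4 y).div_const 24)).add ((hasDerivAt_pow 6 y).div_const 720)
      exact h.congr_deriv (by push_cast; ring))
    (by norm_num) (fun y hy => by show (0:ℝ) ≤ -Real.sin y + y - y^3/6 + y^5/120; nlinarith [B5 hy]) ht
  linarith

lemma B7 {t : ℝ} (ht : 0 ≤ t) : t - t^3/6 + t^5/120 - t^7/5040 ≤ Real.sin t := by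
  have := nonneg_of_deriv (fun y => Real.sin y - y + y^3/6 - y^5/120 + y^7/5040)
    (fun y => Real.cos y - 1 + y^2/2 - y^4/24 + y^6/720)
    (fun y => by
      have h := ((((Real.hasDerivAt_sin y).sub (hasDerivAt_id y)).add
        ((hasDerivAt_pow 3 y).div_const 6)).sub ((hasDerivAt_pow 5 y).div_const 120)).add
        ((hasDerivAt_pow 7 y).div_const 5040)
      exact h.congr_deriv (by push_cast; ring))
    (by norm_num) (fun y hy => by show (0:ℝ) ≤ Real.cos y - 1 + y^2/2 - y^4/24 + y^6/720; nlinarith [B6 hy]) ht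
  linarith

lemma B8 {t : ℝ} (ht : 0 ≤ t) : Real.cos t ≤ 1 - t^2/2 + t^4/24 - t^6/720 + t^8/40320 := by
  have := nonneg_of_deriv (fun y => 1 - y^2/2 + y^4/24 - y^6/720 + y^8/40320 - Real.cos y)
    (fun y => -y + y^3/6 - y^5/120 + y^7/5040 + Real.sin y)
    (fun y => by
      have h := (((((hasDerivAt_const y (1:ℝ)).sub ((hasDerivAt_pow 2 y).div_const 2)).add
        ((hasDerivAt_pow 4 y).div_const 24)).sub ((hasDerivAt_pow 6 y).div_const 720)).add
        ((hasDerivAt_pow 8 y).div_const 40320)).sub (Real.hasDerivAt_cos y)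
      exact h.congr_deriv (by push_cast; ring))
    (by norm_num) (fun y hy => by show (0:ℝ) ≤ -y + y^3/6 - y^5/120 + y^7/5040 + Real.sin y; nlinarith [B7 hy]) ht
  linarith


lemma hqlem (t : ℝ) (ht0 : 0 < t) (htT : t ≤ 1.2698) :
    (0:ℝ) < 2.9775 - 2.7562*t + 0.3283*t^2 + 0.1968*t^3 - 0.03124*t^4 - 0.00513*t^5 := by
  nlinarith [mul_nonneg (sub_nonneg.2 htT) ht0.le,
    mul_nonneg (mul_nonneg (sub_nonneg.2 htT) ht0.le) ht0.le,
    mul_nonneg (mul_nonneg (mul_nonneg (sub_nonneg.2 htT) ht0.le) ht0.le) ht0.le,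
    mul_nonneg (mul_nonneg (sub_nonneg.2 htT) (sub_nonneg.2 htT)) ht0.le,
    mul_nonneg (mul_nonneg (mul_nonneg (sub_nonneg.2 htT) (sub_nonneg.2 htT)) ht0.le) ht0.le,
    sq_nonneg t, sq_nonneg (t-1), pow_pos ht0 3, pow_pos ht0 4, pow_pos ht0 5]

lemma pb2 (p : ℝ) (hp1 : 3.1415926 < p) (hp2 : p < 3.1415927) :
    (9.8696040:ℝ) < p^2 ∧ p^2 < (9.8696047:ℝ) := by
  have hp0 : (0:ℝ) < p := by linarith
  constructor
  · nlinarith [mul_lt_mul_of_pos_right hp1 hp0, mul_lt_mul_of_pos_right hp1 (show (0:ℝ) < 3.1415926 by norm_num)]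
  · nlinarith [mul_lt_mul_of_pos_right hp2 hp0, mul_lt_mul_of_pos_right hp2 (show (0:ℝ) < 3.1415927 by norm_num)]

lemma pb3 (p : ℝ) (hp1 : 3.1415926 < p) (hp2 : p < 3.1415927) :
    (31.006271:ℝ) < p^3 ∧ p^3 < (31.006279:ℝ) := by
  have hp0 : (0:ℝ) < p := by linarith
  obtain ⟨h2l, h2u⟩ := pb2 p hp1 hp2
  constructor
  · nlinarith [mul_lt_mul_of_pos_left h2l hp0, mul_lt_mul_of_pos_right hp1 (show (0:ℝ) < 9.8696040 by norm_num)]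
  · nlinarith [mul_lt_mul_of_pos_left h2u hp0, mul_lt_mul_of_pos_right hp2 (show (0:ℝ) < 9.8696047 by norm_num)]

lemma pb4 (p : ℝ) (hp1 : 3.1415926 < p) (hp2 : p < 3.1415927) :
    (97.409083:ℝ) < p^4 ∧ p^4 < (97.409097:ℝ) := by
  have hp0 : (0:ℝ) < p := by linarith
  obtain ⟨h2l, h2u⟩ := pb2 p hp1 hp2
  have hp2pos : (0:ℝ) < p^2 := by positivity
  constructor
  · nlinarith [mul_lt_mul_of_pos_left h2l hp2pos, mul_lt_mul_of_pos_right h2l (show (0:ℝ) < 9.8696040 by norm_num)]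
  · nlinarith [mul_lt_mul_of_pos_left h2u hp2pos, mul_lt_mul_of_pos_right h2u (show (0:ℝ) < 9.8696047 by norm_num)]

set_option maxHeartbeats 1600000 in
lemma keypoly (p t s c : ℝ) (hp1 : 3.1415926 < p) (hp2 : p < 3.1415927)
    (ht0 : 0 < t) (htT : t ≤ 1.2698)
    (hs : t - t^3/6 + t^5/120 - t^7/5040 ≤ s)
    (hc : c ≤ 1 - t^2/2 + t^4/24 - t^6/720 + t^8/40320) :
    c * (p^2 - 4*(p/2 - t)^2) <
      (8 + (8/p*t + (16/p^2 - 8/3)*t^2 + (32/p^3 - 8/(3*p))*t^3)) * ((p/2 - t)*s) := by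
  have hp0 : (0:ℝ) < p := by linarith
  have hp3 : (0:ℝ) < p^3 := by positivity
  have hx0 : (0:ℝ) < p/2 - t := by linarith
  have hD0 : (0:ℝ) < p^2 - 4*(p/2-t)^2 := by nlinarith
  have ht2 : (0:ℝ) ≤ t^2 := by positivity
  have ht3 : (0:ℝ) ≤ t^3 := by positivity
  have ht4 : (0:ℝ) ≤ t^4 := by positivity
  have ht5 : (0:ℝ) ≤ t^5 := by positivity
  have ht6 : (0:ℝ) ≤ t^6 := by positivity
  obtain ⟨hp2l, hp2u⟩ := pb2 p hp1 hp2
  obtain ⟨hp3l, hp3u⟩ := pb3 p hp1 hp2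
  obtain ⟨hp4l, hp4u⟩ := pb4 p hp1 hp2
  have ht2u : t^2 ≤ (1.6124:ℝ) := by
    nlinarith [mul_le_mul_of_nonneg_left htT ht0.le, mul_le_mul_of_nonneg_left htT (show (0:ℝ) ≤ 1.2698 by norm_num)]
  -- coefficient bounds
  have e0 : (2.9775:ℝ) ≤ 4/45*p^4 + 8/3*p^2 - 32 := by linarith
  have e1 : (-2.7562:ℝ)*t ≤ (-(4/45)*p^3)*t := by
    apply mul_le_mul_of_nonneg_right _ ht0.le
    linarith
  have e2 : (0.3283:ℝ)*t^2 ≤ (-(2/315)*p^4 - 4/9*p^2 + 16/3)*t^2 := by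
    apply mul_le_mul_of_nonneg_right _ ht2
    linarith
  have e3 : (0.1968:ℝ)*t^3 ≤ (2/315*p^3)*t^3 := by
    apply mul_le_mul_of_nonneg_right _ ht3
    linarith
  have e4 : (-0.03124:ℝ)*t^4 ≤ (1/6048*p^4 + 1/45*p^2 - 4/15)*t^4 := by
    apply mul_le_mul_of_nonneg_right _ ht4
    linarith
  have e5 : (-0.00513:ℝ)*t^5 ≤ (-(1/6048)*p^3)*t^5 := by
    apply mul_le_mul_of_nonneg_right _ ht5
    linarith
  have e6 : (0:ℝ) ≤ (2/315 - 1/1890*p^2)*t^6 := by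
    apply mul_nonneg _ ht6
    linarith
  have hq := hqlem t ht0 htT
  have hR : (0:ℝ) < (4/45*p^4 + 8/3*p^2 - 32) + (-(4/45)*p^3)*t + (-(2/315)*p^4 - 4/9*p^2 + 16/3)*t^2
      + (2/315*p^3)*t^3 + (1/6048*p^4 + 1/45*p^2 - 4/15)*t^4 + (-(1/6048)*p^3)*t^5
      + (2/315 - 1/1890*p^2)*t^6 := by linarith
  set S := t - t^3/6 + t^5/120 - t^7/5040 with hSdef
  set C := 1 - t^2/2 + t^4/24 - t^6/720 + t^8/40320 with hCdef
  set P := 8*p^3 + 8*p^2*t + (16*p - 8/3*p^3)*t^2 + (32 - 8/3*p^2)*t^3 with hPdef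
  have hP : 0 < P := by
    rw [hPdef]
    have c2 : (-33:ℝ) ≤ 16*p - 8/3*p^3 := by linarith
    have h1 : (-33:ℝ)*t^2 ≤ (16*p - 8/3*p^3)*t^2 := mul_le_mul_of_nonneg_right c2 ht2
    have h2 : (0:ℝ) ≤ 8*p^2*t := by positivity
    have h3 : (0:ℝ) ≤ (32 - 8/3*p^2)*t^3 := mul_nonneg (by linarith) ht3
    nlinarith [ht2u]
  have hid : P*((p/2-t)*S) - p^3*(C*(p^2-4*(p/2-t)^2)) =
      t^5 * ((4/45*p^4 + 8/3*p^2 - 32) + (-(4/45)*p^3)*t + (-(2/315)*p^4 - 4/9*p^2 + 16/3)*t^2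
      + (2/315*p^3)*t^3 + (1/6048*p^4 + 1/45*p^2 - 4/15)*t^4 + (-(1/6048)*p^3)*t^5
      + (2/315 - 1/1890*p^2)*t^6) := by
    rw [hSdef, hCdef, hPdef]; ring
  have h3 : p^3*(C*(p^2-4*(p/2-t)^2)) < P*((p/2-t)*S) := by
    have := mul_pos (pow_pos ht0 5) hR
    linarith [hid]
  have h1 : p^3*(c*(p^2-4*(p/2-t)^2)) ≤ p^3*(C*(p^2-4*(p/2-t)^2)) :=
    mul_le_mul_of_nonneg_left (mul_le_mul_of_nonneg_right hc hD0.le) hp3.le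
  have h2 : P*((p/2-t)*S) ≤ P*((p/2-t)*s) :=
    mul_le_mul_of_nonneg_left (mul_le_mul_of_nonneg_left hs hx0.le) hP.le
  have hNe : p^3*((8 + (8/p*t + (16/p^2 - 8/3)*t^2 + (32/p^3 - 8/(3*p))*t^3)) * ((p/2 - t)*s)) = P*((p/2-t)*s) := by
    rw [hPdef]; field_simp; ring
  have hfin : p^3*(c*(p^2-4*(p/2-t)^2)) < p^3*((8 + (8/p*t + (16/p^2 - 8/3)*t^2 + (32/p^3 - 8/(3*p))*t^3)) * ((p/2 - t)*s)) := by
    rw [hNe]; linarith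
  exact lt_of_mul_lt_mul_left hfin hp3.le



theorem stmt4 (x : ℝ) (h0 : 0.301 < x) (h1 : x < π / 2) :
    Real.tan x / x <
      (8 + ((8 / π) * (π / 2 - x) + (16 / π ^ 2 - 8 / 3) * (π / 2 - x) ^ 2 +
        (32 / π ^ 3 - 8 / (3 * π)) * (π / 2 - x) ^ 3)) / (π ^ 2 - 4 * x ^ 2) := by
  have hpi1 : (3.1415926:ℝ) < π := by linarith [Real.pi_gt_d20]
  have hpi2 : π < (3.1415927:ℝ) := by linarith [Real.pi_lt_d20]
  have hx0 : (0:ℝ) < x := by linarith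
  have ht0 : (0:ℝ) < π/2 - x := by linarith
  have htT : π/2 - x ≤ (1.2698:ℝ) := by linarith
  have hcosx : 0 < Real.cos x := Real.cos_pos_of_mem_Ioo ⟨by linarith, h1⟩
  have hD : (0:ℝ) < π^2 - 4*x^2 := by nlinarith
  have hs : (π/2 - x) - (π/2 - x)^3/6 + (π/2 - x)^5/120 - (π/2 - x)^7/5040 ≤ Real.cos x := by
    have := B7 ht0.le
    rwa [Real.sin_pi_div_two_sub] at this
  have hc : Real.sin x ≤ 1 - (π/2 - x)^2/2 + (π/2 - x)^4/24 - (π/2 - x)^6/720 + (π/2 - x)^8/40320 := by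
    have := B8 ht0.le
    rwa [Real.cos_pi_div_two_sub] at this
  have key := keypoly π (π/2 - x) (Real.cos x) (Real.sin x) hpi1 hpi2 ht0 htT hs hc
  simp only [show π/2 - (π/2 - x) = x from by ring] at key
  rw [div_lt_div_iff₀ hx0 hD, Real.tan_eq_sin_div_cos, div_mul_eq_mul_div, div_lt_iff₀ hcosx]
  have hring : (8 + (8/π*(π/2 - x) + (16/π^2 - 8/3)*(π/2 - x)^2 + (32/π^3 - 8/(3*π))*(π/2 - x)^3)) * (x * Real.cos x)
      = (8 + ((8/π)*(π/2 - x) + (16/π^2 - 8/3)*(π/2 - x)^2 + (32/π^3 - 8/(3*π))*(π/2 - x)^3)) * x * Real.cos x := by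
    ring
  linarith [key, hring.le, hring.ge]
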